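/- Every stratified propositional logic program has at most one stable model. -/

import Mathlib

/-- A propositional logic-program rule `head :- pos, not neg`.
`head = none` represents a strong constraint (rule with empty head). -/
structure LPRule where
  head : Option ℕ
  pos : Finset ℕ
  neg : Finset ℕ
deriving DecidableEq

namespace LP

/-- Truth of a rule head w.r.t. an interpretation; an empty head is never true. -/
def headTrue (I : Set ℕ) : Option ℕ → Prop
  | none => False
  | some a => a ∈ I

/-- The body of a rule is true w.r.t. `I`. -/
def bodyTrue (I : Set ℕ) (r : LPRule) : Prop :=
  (∀ b ∈ r.pos, b ∈ I) ∧ (∀ b ∈ r.neg, b ∉ I)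

/-- `I` satisfies rule `r`. -/
def satRule (I : Set ℕ) (r : LPRule) : Prop := bodyTrue I r → headTrue I r.head

/-- `I` is a model of the program `P`. -/
def isModel (P : Set LPRule) (I : Set ℕ) : Prop := ∀ r ∈ P, satRule I r

/-- A positive (negation-free) program. -/
def isPositive (P : Set LPRule) : Prop := ∀ r ∈ P, r.neg = ∅

/-- A constraint-free program (no rules with empty head). -/
def constraintFree (P : Set LPRule) : Prop := ∀ r ∈ P, r.head ≠ none

/-- The Gelfond-Lifschitz reduct `P^I`. -/
def reduct (P : Set LPRule) (I : Set ℕ) : Set LPRule :=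
  (fun r => LPRule.mk r.head r.pos ∅) '' {r ∈ P | ∀ b ∈ r.neg, b ∉ I}

/-- `M` is the least model of `P`. -/
def isLeastModel (P : Set LPRule) (M : Set ℕ) : Prop :=
  isModel P M ∧ ∀ M', isModel P M' → M ⊆ M'

/-- `M` is a stable model of `P`: it is the least model of the reduct `P^M`. -/
def isStable (P : Set LPRule) (M : Set ℕ) : Prop := isLeastModel (reduct P M) M

/-- `facts S` is the set of facts `{p :- | p ∈ S}`. -/
def facts (S : Set ℕ) : Set LPRule := (fun p => LPRule.mk (some p) ∅ ∅) '' S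

/-- The atoms occurring in a rule. -/
def ruleAtoms (r : LPRule) : Set ℕ := {a | r.head = some a} ∪ ↑r.pos ∪ ↑r.neg

/-- The Herbrand base of a program: all atoms occurring in it. -/
def atoms (P : Set LPRule) : Set ℕ := ⋃ r ∈ P, ruleAtoms r

/-- `p` depends on `q`: some rule has head `p` and `q` in its body. -/
def dependsOn (P : Set LPRule) (p q : ℕ) : Prop :=
  ∃ r ∈ P, r.head = some p ∧ (q ∈ r.pos ∨ q ∈ r.neg)

/-- `P` is stratified: no rule with head `p` and `not q` in the body where
`q` transitively depends on `p`. -/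
def stratified (P : Set LPRule) : Prop :=
  ∀ r ∈ P, ∀ p, r.head = some p → ∀ q ∈ r.neg, ¬ Relation.TransGen (dependsOn P) q p

/-- Hypotheses `H` do not occur in rule heads of `P`. -/
def hypFree (P : Set LPRule) (H : Finset ℕ) : Prop :=
  ∀ r ∈ P, ∀ h ∈ H, r.head ≠ some h

/-- `S` is an admissible solution: `S ⊆ H` and some stable model of
`P ∪ facts S` makes all observations true. -/
def admissible (P : Set LPRule) (H obsP obsN : Finset ℕ) (S : Set ℕ) : Prop :=
  S ⊆ ↑H ∧ ∃ M, isStable (P ∪ facts S) M ∧ (∀ o ∈ obsP, o ∈ M) ∧ (∀ o ∈ obsN, o ∉ M)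

/-- `sum_γ`: total penalty of the hypotheses of `H` belonging to `S`. -/
noncomputable def cost (γ : ℕ → NNReal) (H : Finset ℕ) (S : Set ℕ) : NNReal :=
  ∑ h ∈ H, S.indicator γ h

/-- `S` is an optimal solution: admissible with minimal total penalty. -/
def optimal (P : Set LPRule) (H obsP obsN : Finset ℕ) (γ : ℕ → NNReal) (S : Set ℕ) : Prop :=
  admissible P H obsP obsN S ∧
  ∀ S', admissible P H obsP obsN S' → cost γ H S ≤ cost γ H S'

end LP

section Aux

open LP Relation

/-- A negative edge: a rule with head `p` and `q` negated in its body. -/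
def negEdge (P : Set LPRule) (p q : ℕ) : Prop :=
  ∃ r ∈ P, r.head = some p ∧ q ∈ r.neg

/-- `q` is strictly below `p`: a dependency path from `p` to `q` through a negative edge. -/
def below (P : Set LPRule) (q p : ℕ) : Prop :=
  ∃ a b, ReflTransGen (dependsOn P) p a ∧ negEdge P a b ∧
    ReflTransGen (dependsOn P) b q

lemma negEdge_dep {P : Set LPRule} {p q : ℕ} (h : negEdge P p q) : dependsOn P p q := by
  obtain ⟨r, hr, hh, hq⟩ := h; exact ⟨r, hr, hh, Or.inr hq⟩

lemma below_trans {P : Set LPRule} {x q p : ℕ}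
    (h1 : below P x q) (h2 : below P q p) : below P x p := by
  obtain ⟨a, b, hqa, hne, hbx⟩ := h1
  obtain ⟨c, d, hpc, hne', hdq⟩ := h2
  exact ⟨a, b, ((hpc.trans (ReflTransGen.single (negEdge_dep hne'))).trans hdq).trans hqa,
    hne, hbx⟩

lemma dep_below {P : Set LPRule} {p q x : ℕ}
    (h : dependsOn P p q) (hx : below P x q) : below P x p := by
  obtain ⟨a, b, hqa, hne, hbx⟩ := hx
  exact ⟨a, b, (ReflTransGen.single h).trans hqa, hne, hbx⟩

lemma negEdge_below {P : Set LPRule} {p q : ℕ} (h : negEdge P p q) : below P q p :=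
  ⟨p, q, ReflTransGen.refl, h, ReflTransGen.refl⟩

lemma dep_atom {P : Set LPRule} {p q : ℕ} (h : dependsOn P p q) : q ∈ atoms P := by
  obtain ⟨r, hr, hh, hq⟩ := h
  refine Set.mem_biUnion hr ?_
  rcases hq with hq | hq
  · exact Or.inl (Or.inr hq)
  · exact Or.inr hq

lemma negEdge_atom {P : Set LPRule} {p q : ℕ} (h : negEdge P p q) : q ∈ atoms P :=
  dep_atom (negEdge_dep h)

lemma below_atom {P : Set LPRule} {q p : ℕ} (h : below P q p) : q ∈ atoms P := by
  obtain ⟨a, b, _, hne, hbq⟩ := h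
  rcases hbq.cases_tail with rfl | ⟨c, _, hcq⟩
  · exact negEdge_atom hne
  · exact dep_atom hcq

lemma below_irrefl {P : Set LPRule} (hS : stratified P) (q : ℕ) : ¬ below P q q := by
  rintro ⟨a, b, hqa, ⟨r, hr, hh, hb⟩, hbq⟩
  refine hS r hr a hh b hb ?_
  have h3 : ReflTransGen (dependsOn P) b a := hbq.trans hqa
  rcases (Relation.reflTransGen_iff_eq_or_transGen.mp h3) with h | h
  · subst h; exact TransGen.single ⟨r, hr, hh, Or.inr hb⟩
  · exact h

lemma stratified_mono {P0 P : Set LPRule} (hsub : P0 ⊆ P) (hS : stratified P) :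
    stratified P0 := by
  intro r hr p hh q hq hT
  exact hS r (hsub hr) p hh q hq (TransGen.mono (fun x y ⟨r', hr', h1, h2⟩ => ⟨r', hsub hr', h1, h2⟩) _ _ hT)

lemma atoms_finite {P : Set LPRule} (hFin : P.Finite) : (atoms P).Finite := by
  refine Set.Finite.biUnion hFin fun r _ => ?_
  have h1 : {a | r.head = some a}.Finite := by
    rcases h : r.head with _ | a
    · convert Set.finite_empty; ext x; simp [h]
    · exact (Set.finite_singleton a).subset fun x hx => by
        simp only [h, Option.some.injEq, Set.mem_setOf_eq] at hx
        simp [hx]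
  exact ((h1.union r.pos.finite_toSet).union r.neg.finite_toSet)

/-- The "negative depth" measure of an atom. -/
noncomputable def meas (P : Set LPRule) (p : ℕ) : ℕ :=
  {q | q ∈ atoms P ∧ below P q p}.ncard

lemma measSet_finite {P : Set LPRule} (hFin : P.Finite) (p : ℕ) :
    {q | q ∈ atoms P ∧ below P q p}.Finite :=
  (atoms_finite hFin).subset fun _ hq => hq.1

lemma meas_le {P : Set LPRule} (hFin : P.Finite) {p q : ℕ} (h : dependsOn P p q) :
    meas P q ≤ meas P p :=
  Set.ncard_le_ncard (fun x hx => ⟨hx.1, dep_below h hx.2⟩) (measSet_finite hFin p)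

lemma meas_lt {P : Set LPRule} (hFin : P.Finite) (hIrr : ∀ x, ¬ below P x x)
    {p q : ℕ} (h : below P q p) : meas P q < meas P p := by
  refine Set.ncard_lt_ncard ?_ (measSet_finite hFin p)
  constructor
  · exact fun x hx => ⟨hx.1, below_trans hx.2 h⟩
  · intro hsub
    exact hIrr q (hsub ⟨below_atom h, h⟩).2

/-- One direction of the inductive step: atoms of measure `≤ n` in `M` are in `N`. -/
lemma step {P : Set LPRule} (hFin : P.Finite) (hCF : constraintFree P)
    (hIrr : ∀ x, ¬ below P x x) {M N : Set ℕ}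
    (hM : isStable P M) (hN : isStable P N) (n : ℕ)
    (IH : ∀ q, meas P q < n → (q ∈ M ↔ q ∈ N)) :
    ∀ p, meas P p ≤ n → p ∈ M → p ∈ N := by
  set K : Set ℕ := {p | meas P p ≤ n → p ∈ N} with hK
  have hKmod : isModel (reduct P M) K := by
    rintro r' ⟨r, ⟨hrP, hnegM⟩, rfl⟩ hbody
    rcases h : r.head with _ | p
    · exact absurd h (hCF r hrP)
    · show p ∈ K
      intro hle
      -- the reduct of r belongs to `reduct P N`
      have hnegN : ∀ b ∈ r.neg, b ∉ N := by
        intro b hb hbN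
        have hblt : meas P b < n :=
          lt_of_lt_of_le (meas_lt hFin hIrr (negEdge_below ⟨r, hrP, h, hb⟩)) hle
        exact hnegM b hb ((IH b hblt).mpr hbN)
      have hmem : LPRule.mk r.head r.pos ∅ ∈ reduct P N := ⟨r, ⟨hrP, hnegN⟩, rfl⟩
      have hposN : ∀ b ∈ r.pos, b ∈ N := by
        intro b hb
        have hble : meas P b ≤ n :=
          le_trans (meas_le hFin ⟨r, hrP, h, Or.inl hb⟩) hle
        exact hbody.1 b hb hble
      have := hN.1 _ hmem ⟨hposN, by simp⟩
      rw [h] at this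
      exact this
  intro p hle hpM
  exact hM.2 K hKmod hpM hle

/-- Uniqueness for constraint-free programs with irreflexive `below`. -/
lemma unique_CF {P : Set LPRule} (hFin : P.Finite) (hCF : constraintFree P)
    (hIrr : ∀ x, ¬ below P x x) {M N : Set ℕ}
    (hM : isStable P M) (hN : isStable P N) : M = N := by
  have key : ∀ n p, meas P p ≤ n → (p ∈ M ↔ p ∈ N) := by
    intro n
    induction n using Nat.strong_induction_on with
    | _ n IH =>
      have IH' : ∀ q, meas P q < n → (q ∈ M ↔ q ∈ N) := fun q hq => IH _ hq q le_rfl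
      intro p hp
      exact ⟨step hFin hCF hIrr hM hN n IH' p hp,
        step hFin hCF hIrr hN hM n (fun q hq => (IH' q hq).symm) p hp⟩
  ext p
  exact key (meas P p) p le_rfl

/-- Stability is preserved by deleting constraints. -/
lemma stable_restrict (P : Set LPRule) (M : Set ℕ) (hM : isStable P M) :
    isStable {r ∈ P | r.head ≠ none} M := by
  constructor
  · rintro r' ⟨r, ⟨⟨hrP, _⟩, hneg⟩, rfl⟩
    exact hM.1 _ ⟨r, ⟨hrP, hneg⟩, rfl⟩
  · intro K hK
    have hmod : isModel (reduct P M) (K ∩ M) := by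
      rintro r' ⟨r, ⟨hrP, hneg⟩, rfl⟩ hbody
      have hposM : ∀ b ∈ r.pos, b ∈ M := fun b hb => (hbody.1 b hb).2
      have hMtrue := hM.1 _ ⟨r, ⟨hrP, hneg⟩, rfl⟩ ⟨hposM, by simp⟩
      rcases h : r.head with _ | a
      · rw [h] at hMtrue; exact hMtrue
      · have hne : r.head ≠ none := by simp [h]
        have hKtrue := hK _ ⟨r, ⟨⟨hrP, hne⟩, hneg⟩, rfl⟩
          ⟨fun b hb => (hbody.1 b hb).1, by simp⟩
        rw [h] at hKtrue hMtrue
        exact ⟨hKtrue, hMtrue⟩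
    exact fun p hp => (hM.2 _ hmod hp).1

end Aux

/-- a stratified program has at most one stable model. -/
theorem stratified_at_most_one_stable (P : Set LPRule) (hFin : P.Finite)
    (hStrat : LP.stratified P) :
    ∀ M N, LP.isStable P M → LP.isStable P N → M = N := by
  intro M N hM hN
  have hsub : {r ∈ P | r.head ≠ none} ⊆ P := fun r hr => hr.1
  have hFin0 : ({r ∈ P | r.head ≠ none} : Set LPRule).Finite := hFin.subset hsub
  have hCF0 : LP.constraintFree {r ∈ P | r.head ≠ none} := fun r hr => hr.2
  have hIrr := below_irrefl (stratified_mono hsub hStrat)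
  exact unique_CF hFin0 hCF0 hIrr (stable_restrict P M hM) (stable_restrict P N hN)
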